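/- Consider the scalar system x'(t) = u(t) x(t), x(0) = 1, with controls u ∈ L^∞((0,∞), [0,1]). For u ≡ 1 the infinite-horizon cost ∫₀^∞ (u(t) - 1) x(t) dt equals 0, while for the control u_τ = 1_{[0,τ)} (any τ ≥ 0) the cost equals ∫_τ^∞ (-1) e^τ dt = -∞; in particular the constant control 1 is not optimal for the infinite-horizon problem. -/

import Mathlib

open MeasureTheory Set Filter intervalIntegral

/-- In the counterexample `x' = ux`, `x(0)=1`, `cost = ∫ (u-1)x`: the constant control `1`
gives zero cost, while for each `τ ≥ 0` the bang-bang control `u_τ = 1_{[0,τ)}` has solution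
`x_τ` with cost diverging to `-∞`; hence the constant control `1` is not optimal. -/
theorem constant_control_not_optimal :
    ((∫ t in Set.Ioi (0:ℝ), ((1:ℝ) - 1) * Real.exp t) = 0) ∧
    (∀ τ : ℝ, 0 ≤ τ →
      ∀ (uτ xτ : ℝ → ℝ),
        (∀ t, uτ t = if t < τ then 1 else 0) →
        (∀ t, xτ t = if t < τ then Real.exp t else Real.exp τ) →
        xτ 0 = 1 ∧
        (∀ t ∈ Set.Ici (0:ℝ), t ≠ τ → HasDerivAt xτ (uτ t * xτ t) t) ∧
        Tendsto (fun T => ∫ t in (0:ℝ)..T, (uτ t - 1) * xτ t) atTop atBot) := by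
  constructor
  · simp
  intro τ hτ uτ xτ huτ hxτ
  have hfun : (fun t => (uτ t - 1) * xτ t) = fun t => if t < τ then 0 else -Real.exp τ := by
    funext t
    rw [huτ, hxτ]
    by_cases h : t < τ <;> simp [h]
  have hne : ∀ᵐ t : ℝ, t ≠ τ := by
    rw [ae_iff]; simp
  refine ⟨?_, ?_, ?_⟩
  · rw [hxτ]
    by_cases h : (0:ℝ) < τ
    · simp [h]
    · have : τ = 0 := le_antisymm (not_lt.mp h) hτ
      simp [this]
  · intro t _ htne
    rcases lt_or_gt_of_ne htne with h | h
    · have : xτ =ᶠ[nhds t] Real.exp := by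
        filter_upwards [Iio_mem_nhds h] with s hs
        rw [hxτ]; simp [show s < τ from hs]
      have : HasDerivAt xτ (Real.exp t) t :=
        (Real.hasDerivAt_exp t).congr_of_eventuallyEq this
      convert this using 1
      rw [huτ, hxτ]; simp [h]
    · have : xτ =ᶠ[nhds t] (fun _ => Real.exp τ) := by
        filter_upwards [Ioi_mem_nhds h] with s hs
        rw [hxτ]; simp [not_lt.mpr (le_of_lt (show τ < s from hs))]
      have hd : HasDerivAt xτ 0 t :=
        (hasDerivAt_const t (Real.exp τ)).congr_of_eventuallyEq this
      convert hd using 1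
      rw [huτ]; simp [not_lt.mpr (le_of_lt h)]
  · rw [hfun]
    set g : ℝ → ℝ := fun t => if t < τ then 0 else -Real.exp τ with hg
    have hkey : ∀ T : ℝ, τ ≤ T → (∫ t in (0:ℝ)..T, g t) = (T - τ) * (-Real.exp τ) := by
      intro T hT
      have hae : ∀ᵐ t : ℝ, t ∈ Set.uIoc (0:ℝ) τ → g t = 0 := by
        filter_upwards [hne] with t ht hmem
        rw [uIoc_of_le hτ] at hmem
        have : t < τ := lt_of_le_of_ne hmem.2 ht
        simp [hg, this]
      have heq : EqOn g (fun _ => -Real.exp τ) (Set.uIcc τ T) := by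
        intro t ht
        rw [Set.uIcc_of_le hT] at ht
        simp [hg, not_lt.mpr ht.1]
      have hi1 : IntervalIntegrable g volume 0 τ := by
        refine (_root_.intervalIntegrable_const (c := (0:ℝ))).congr_ae ?_
        refine (ae_restrict_iff' measurableSet_uIoc).mpr ?_
        filter_upwards [hae] with t ht hmem
        exact (ht hmem).symm
      have hi2 : IntervalIntegrable g volume τ T := by
        refine (_root_.intervalIntegrable_const (c := -Real.exp τ)).congr_ae ?_
        refine (ae_restrict_iff' measurableSet_uIoc).mpr ?_
        filter_upwards with t ht
        exact (heq (uIoc_subset_uIcc ht)).symm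
      rw [← integral_add_adjacent_intervals hi1 hi2]
      have h1 : (∫ t in (0:ℝ)..τ, g t) = 0 := by
        rw [integral_congr_ae hae]; simp
      have h2 : (∫ t in τ..T, g t) = (T - τ) * (-Real.exp τ) := by
        rw [integral_congr heq, intervalIntegral.integral_const, smul_eq_mul]
      rw [h1, h2, zero_add]
    have : Tendsto (fun T : ℝ => (T - τ) * (-Real.exp τ)) atTop atBot := by
      apply Tendsto.atTop_mul_const_of_neg (neg_lt_zero.mpr (Real.exp_pos τ))
      exact tendsto_atTop_add_const_right _ _ tendsto_id
    refine this.congr' ?_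
    filter_upwards [eventually_ge_atTop τ] with T hT
    exact (hkey T hT).symm
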